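/- The function D'' = y cos γ + 1 is constant along solutions of the historical system ẋ = y + cos γ, ẏ = sin γ, γ̇ = −cos²γ if it is initially zero; more precisely, if y(0) cos γ(0) + 1 = 0 then y(t) cos γ(t) + 1 = 0 for all t in the interval of definition. -/

import Mathlib

open Real

theorem abnormal_locus_invariant
    (I : Set ℝ) (hI : I.OrdConnected) (h0 : (0 : ℝ) ∈ I)
    (x y γ : ℝ → ℝ)
    (hx : ∀ t ∈ I, HasDerivAt x (y t + Real.cos (γ t)) t)
    (hy : ∀ t ∈ I, HasDerivAt y (Real.sin (γ t)) t)
    (hγ : ∀ t ∈ I, HasDerivAt γ (-(Real.cos (γ t)) ^ 2) t)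
    (hinit : y 0 * Real.cos (γ 0) + 1 = 0) :
    ∀ t ∈ I, y t * Real.cos (γ t) + 1 = 0 := by
  set D : ℝ → ℝ := fun t => y t * Real.cos (γ t) + 1 with hD
  set v : ℝ → ℝ → ℝ := fun t d => Real.sin (γ t) * Real.cos (γ t) * d with hv
  have hvlip : ∀ t, LipschitzWith 1 (v t) := by
    intro t
    have h1 : |Real.sin (γ t) * Real.cos (γ t)| ≤ 1 := by
      rw [abs_mul]
      calc |Real.sin (γ t)| * |Real.cos (γ t)| ≤ 1 * 1 :=
            mul_le_mul (Real.abs_sin_le_one _) (Real.abs_cos_le_one _)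
              (abs_nonneg _) zero_le_one
        _ = 1 := one_mul 1
    apply LipschitzWith.of_dist_le_mul
    intro a b
    simp only [hv, Real.dist_eq, NNReal.coe_one, one_mul]
    rw [← mul_sub, abs_mul]
    exact mul_le_of_le_one_left (abs_nonneg _) h1
  have hD' : ∀ t ∈ I, HasDerivAt D (v t (D t)) t := by
    intro t ht
    have h := ((hy t ht).mul ((hγ t ht).cos)).add_const 1
    refine h.congr_deriv ?_
    simp only [hv, hD]
    ring
  have hDcont : ∀ s ⊆ I, ContinuousOn D s := fun s hs t ht =>
    ((hD' t (hs ht)).continuousAt).continuousWithinAt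
  intro t ht
  rcases le_or_gt 0 t with h0t | ht0
  · have hsub : Set.Icc (0:ℝ) t ⊆ I := hI.out h0 ht
    have := ODE_solution_unique_of_mem_Icc_right
      (v := v) (s := fun _ => Set.univ)
      (fun t _ => (hvlip t).lipschitzOnWith)
      (hDcont _ hsub)
      (fun s hs => (hD' s (hsub (Set.Ico_subset_Icc_self hs))).hasDerivWithinAt)
      (fun _ _ => Set.mem_univ _)
      (continuousOn_const (c := (0:ℝ)))
      (fun s hs => by
        simpa [hv] using (hasDerivAt_const s (0:ℝ)).hasDerivWithinAt)
      (fun _ _ => Set.mem_univ _)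
      (by simpa [hD] using hinit)
      (Set.right_mem_Icc.2 h0t)
    simpa [hD] using this
  · have hsub : Set.Icc t (0:ℝ) ⊆ I := hI.out ht h0
    have := ODE_solution_unique_of_mem_Icc_left
      (v := v) (s := fun _ => Set.univ)
      (fun t _ => (hvlip t).lipschitzOnWith)
      (hDcont _ hsub)
      (fun s hs => (hD' s (hsub (Set.Ioc_subset_Icc_self hs))).hasDerivWithinAt)
      (fun _ _ => Set.mem_univ _)
      (continuousOn_const (c := (0:ℝ)))
      (fun s hs => by
        simpa [hv] using (hasDerivAt_const s (0:ℝ)).hasDerivWithinAt)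
      (fun _ _ => Set.mem_univ _)
      (by simpa [hD] using hinit)
      (Set.left_mem_Icc.2 ht0.le)
    simpa [hD] using this
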